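/- Let ν₁, ν₂ be probability measures on a metric space (X, d) and let q be any coupling between ν₁ and ν₂. Then ∫_{X×X} d(x₁, x₂) dq(x₁, x₂) ≥ ∫∫ d(x₁, x₂) dν₁(x₁) dν₂(x₂) − √Var(ν₂). In particular, d_{W₁}(ν₁, ν₂) ≥ ∫∫ d dν₁ dν₂ − √Var(ν₂). -/

import Mathlib

open scoped ENNReal

open MeasureTheory

/-- The variance between two measures on a metric space:
`Var(μ, ν) = ∫∫ d²(x, y) dμ(x) dν(y)` (valued in `ℝ≥0∞`, may be `∞`). -/
noncomputable def Var {X : Type*} [MetricSpace X] [MeasurableSpace X]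
    (μ ν : Measure X) : ℝ≥0∞ :=
  ∫⁻ x, ∫⁻ y, edist x y ^ 2 ∂ν ∂μ

/-- The 1-Wasserstein distance: the infimum of `∫ d(x, y) dq(x, y)` over all
couplings `q` of `μ` and `ν` (valued in `ℝ≥0∞`, may be `∞`). -/
noncomputable def W1 {X : Type*} [MetricSpace X] [MeasurableSpace X]
    (μ ν : Measure X) : ℝ≥0∞ :=
  ⨅ (q : Measure (X × X)) (_ : q.map Prod.fst = μ ∧ q.map Prod.snd = ν),
    ∫⁻ p, edist p.1 p.2 ∂q

/-- An `ℝ≥0∞`-valued function satisfying a Lipschitz-type inequality is measurable. -/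
lemma measurable_of_enn_lipschitz {X : Type*} [MetricSpace X] [MeasurableSpace X]
    [BorelSpace X] {f : X → ℝ≥0∞} (h : ∀ x y, f x ≤ edist x y + f y) :
    Measurable f := by
  by_cases htop : ∀ x, f x = ⊤
  · simp only [funext htop]; exact (measurable_const : Measurable fun _ : X => (⊤ : ℝ≥0∞))
  · push_neg at htop
    obtain ⟨x₀, hx₀⟩ := htop
    have hfin : ∀ x, f x ≠ ⊤ := by
      intro x hx
      have hle := h x x₀
      rw [hx, top_le_iff] at hle
      exact (ENNReal.add_ne_top.2 ⟨edist_ne_top x x₀, hx₀⟩) hle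
    set g : X → ℝ := fun x => (f x).toReal with hg_def
    have key : ∀ x y : X, g x - g y ≤ dist x y := by
      intro x y
      have hle := h x y
      have h1 : (f x).toReal ≤ (edist x y + f y).toReal :=
        ENNReal.toReal_mono (ENNReal.add_ne_top.2 ⟨edist_ne_top x y, hfin y⟩) hle
      rw [ENNReal.toReal_add (edist_ne_top x y) (hfin y)] at h1
      have h2 : (edist x y).toReal = dist x y := by
        rw [edist_dist, ENNReal.toReal_ofReal dist_nonneg]
      rw [h2] at h1
      simp only [hg_def]
      linarith
    have hg : LipschitzWith 1 g := by
      refine LipschitzWith.of_dist_le_mul fun x y => ?_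
      rw [NNReal.coe_one, one_mul, Real.dist_eq, abs_sub_le_iff]
      exact ⟨key x y, by rw [dist_comm]; exact key y x⟩
    have hfg : f = fun x => ENNReal.ofReal (g x) :=
      funext fun x => (ENNReal.ofReal_toReal (hfin x)).symm
    rw [hfg]
    exact ENNReal.measurable_ofReal.comp hg.continuous.measurable

lemma key_coupling_bound {X : Type*} [MetricSpace X]
    [MeasurableSpace X] [BorelSpace X]
    (ν₁ ν₂ : Measure X) [IsProbabilityMeasure ν₁] [IsProbabilityMeasure ν₂]
    (q : Measure (X × X)) (hq : q.map Prod.fst = ν₁ ∧ q.map Prod.snd = ν₂) :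
    ∫⁻ x, ∫⁻ y, edist x y ∂ν₂ ∂ν₁
      ≤ (∫⁻ p, edist p.1 p.2 ∂q) + Var ν₂ ν₂ ^ (1 / 2 : ℝ) := by
  have hconj : Real.HolderConjugate 2 2 :=
    (Real.holderConjugate_iff_eq_conjExponent one_lt_two).2 (by norm_num)
  set F : X → ℝ≥0∞ := fun x => ∫⁻ y, edist x y ∂ν₂ with hF_def
  set H : X → ℝ≥0∞ := fun x => (∫⁻ y, edist x y ^ (2 : ℝ) ∂ν₂) ^ (1 / 2 : ℝ) with hH_def
  have hFlip : ∀ x x', F x ≤ edist x x' + F x' := by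
    intro x x'
    calc F x ≤ ∫⁻ y, (edist x x' + edist x' y) ∂ν₂ :=
          lintegral_mono fun y => edist_triangle _ _ _
      _ = edist x x' + F x' := by
          rw [lintegral_add_left measurable_const, lintegral_const, measure_univ, mul_one]
  have hF : Measurable F := measurable_of_enn_lipschitz hFlip
  have hHlip : ∀ x x', H x ≤ edist x x' + H x' := by
    intro x x'
    have step1 : H x ≤ (∫⁻ y, (edist x x' + edist x' y) ^ (2 : ℝ)
        ∂ν₂) ^ (1 / 2 : ℝ) := by
      refine ENNReal.rpow_le_rpow (lintegral_mono fun y => ?_) (by norm_num)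
      exact ENNReal.rpow_le_rpow (edist_triangle _ _ _) (by norm_num)
    have step2 := ENNReal.lintegral_Lp_add_le
      (μ := ν₂) (f := fun _ => edist x x') (g := fun y => edist x' y)
      aemeasurable_const (measurable_edist_right).aemeasurable (one_le_two : (1:ℝ) ≤ 2)
    simp only [Pi.add_apply] at step2
    have step3 : (∫⁻ _ : X, edist x x' ^ (2 : ℝ) ∂ν₂) ^ (1 / 2 : ℝ) = edist x x' := by
      rw [lintegral_const, measure_univ, mul_one, ← ENNReal.rpow_mul]
      norm_num
    calc H x ≤ _ := step1
      _ ≤ (∫⁻ _ : X, edist x x' ^ (2 : ℝ) ∂ν₂) ^ (1 / 2 : ℝ)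
            + (∫⁻ y, edist x' y ^ (2 : ℝ) ∂ν₂) ^ (1 / 2 : ℝ) := step2
      _ = edist x x' + H x' := by rw [step3]
  have hH : Measurable H := measurable_of_enn_lipschitz hHlip
  have hFH : ∀ x, F x ≤ H x := by
    intro x
    have h := ENNReal.lintegral_mul_le_Lp_mul_Lq ν₂ hconj
      (measurable_edist_right (x := x)).aemeasurable
      (aemeasurable_const (b := (1 : ℝ≥0∞)))
    simp only [Pi.mul_apply, mul_one, ENNReal.one_rpow, lintegral_const,
      measure_univ, ENNReal.one_rpow, one_mul] at h
    simpa [hF_def, hH_def] using h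
  have hHint : ∫⁻ x, H x ∂ν₂ ≤ Var ν₂ ν₂ ^ (1 / 2 : ℝ) := by
    have h := ENNReal.lintegral_mul_le_Lp_mul_Lq ν₂ hconj hH.aemeasurable
      (aemeasurable_const (b := (1 : ℝ≥0∞)))
    simp only [Pi.mul_apply, mul_one, ENNReal.one_rpow, lintegral_const,
      measure_univ, ENNReal.one_rpow, one_mul] at h
    have hH2 : ∀ x, H x ^ (2 : ℝ) = ∫⁻ y, edist x y ^ 2 ∂ν₂ := by
      intro x
      rw [hH_def]
      simp only
      rw [← ENNReal.rpow_mul]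
      norm_num
    calc ∫⁻ x, H x ∂ν₂ ≤ (∫⁻ x, H x ^ (2 : ℝ) ∂ν₂) ^ (1 / 2 : ℝ) := h
      _ = Var ν₂ ν₂ ^ (1 / 2 : ℝ) := by
          rw [Var]; congr 1; exact lintegral_congr hH2
  have hFint : ∫⁻ x, F x ∂ν₂ ≤ Var ν₂ ν₂ ^ (1 / 2 : ℝ) :=
    le_trans (lintegral_mono hFH) hHint
  calc ∫⁻ x, ∫⁻ y, edist x y ∂ν₂ ∂ν₁
      = ∫⁻ p : X × X, F p.1 ∂q := by
        rw [← hq.1, lintegral_map hF measurable_fst]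
    _ ≤ ∫⁻ p : X × X, (F p.2 + edist p.1 p.2) ∂q := by
        refine lintegral_mono fun p => ?_
        rw [add_comm]
        exact hFlip p.1 p.2
    _ = (∫⁻ p : X × X, F p.2 ∂q) + ∫⁻ p, edist p.1 p.2 ∂q :=
        lintegral_add_left (hF.comp measurable_snd) _
    _ = (∫⁻ x, F x ∂ν₂) + ∫⁻ p, edist p.1 p.2 ∂q := by
        have hmap : ∀ (μ : Measure X), q.map Prod.snd = μ →
            ∫⁻ p : X × X, F p.2 ∂q = ∫⁻ x, F x ∂μ := by
          rintro μ rfl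
          exact (lintegral_map hF measurable_snd).symm
        rw [hmap ν₂ hq.2]
    _ ≤ Var ν₂ ν₂ ^ (1 / 2 : ℝ) + ∫⁻ p, edist p.1 p.2 ∂q := add_le_add_left hFint _
    _ = (∫⁻ p, edist p.1 p.2 ∂q) + Var ν₂ ν₂ ^ (1 / 2 : ℝ) := add_comm _ _

/-- For any coupling `q` of `ν₁, ν₂`, one has
`∫ d dq ≥ ∫∫ d dν₁ dν₂ − √Var(ν₂)` (stated as `∫∫ d dν₁ dν₂ ≤ ∫ d dq + √Var(ν₂)`),
and in particular `∫∫ d dν₁ dν₂ ≤ d_{W₁}(ν₁, ν₂) + √Var(ν₂)`. -/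
theorem coupling_int_ge_double_int_sub_sqrt_var {X : Type*} [MetricSpace X]
    [MeasurableSpace X] [BorelSpace X]
    (ν₁ ν₂ : Measure X) [IsProbabilityMeasure ν₁] [IsProbabilityMeasure ν₂]
    (q : Measure (X × X)) (hq : q.map Prod.fst = ν₁ ∧ q.map Prod.snd = ν₂) :
    (∫⁻ x, ∫⁻ y, edist x y ∂ν₂ ∂ν₁
        ≤ (∫⁻ p, edist p.1 p.2 ∂q) + Var ν₂ ν₂ ^ (1 / 2 : ℝ)) ∧
      (∫⁻ x, ∫⁻ y, edist x y ∂ν₂ ∂ν₁ ≤ W1 ν₁ ν₂ + Var ν₂ ν₂ ^ (1 / 2 : ℝ)) := by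
  refine ⟨key_coupling_bound ν₁ ν₂ q hq, ?_⟩
  rw [W1, ENNReal.iInf_add]
  refine le_iInf fun q' => ?_
  rw [ENNReal.iInf_add]
  exact le_iInf fun hq' => key_coupling_bound ν₁ ν₂ q' hq'
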